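/- arXiv:1902.08440 — 3 statements merged into one kernel-verified Lean document; each statement's English description precedes it below -/
import Mathlib

section
/- Under the hypotheses of the doubly-indexed setting (pairwise variables $Z_{ij}$ with $Z_{ij}$ independent of $Z_{kl}$ when the index pairs are disjoint, and $E(h(Z_{ij})^2) < \infty$), the average converges in probability: $\frac{1}{|\mathcal{I}_n|}\sum_{(i,j)\in\mathcal{I}_n} h(Z_{ij}) - \frac{1}{|\mathcal{I}_n|}\sum_{(i,j)\in\mathcal{I}_n} E(h(Z_{ij})) = O_p(1/\sqrt{n})$; in particular, for every $\epsilon > 0$, $P\left( \left| \frac{1}{|\mathcal{I}_n|}\sum_{(i,j)} (h(Z_{ij}) - E h(Z_{ij})) \right| > \epsilon \right) \to 0$ as $n \to \infty$. -/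
open MeasureTheory ProbabilityTheory Finset Filter

/-- The index set `{(i,j) : 0 ≤ i < j < n}` of pairs. -/
def pairIdx (n : ℕ) : Finset (ℕ × ℕ) :=
  (Finset.range n ×ˢ Finset.range n).filter (fun p => p.1 < p.2)

lemma card_pairIdx (n : ℕ) : (pairIdx n).card * 2 = n * (n - 1) := by
  have h1 : (pairIdx n).card = ∑ j ∈ Finset.range n, j := by
    rw [pairIdx, Finset.card_eq_sum_card_fiberwise (f := Prod.snd) (t := Finset.range n)
      (by intro p hp; simp at hp ⊢; omega)]
    refine Finset.sum_congr rfl fun j hj => ?_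
    rw [Finset.mem_range] at hj
    have heq : ((Finset.range n ×ˢ Finset.range n).filter (fun p => p.1 < p.2)).filter
        (fun p => p.2 = j) = (Finset.range j).image (fun i => (i, j)) := by
      ext ⟨a, b⟩
      simp only [Finset.mem_filter, Finset.mem_product, Finset.mem_range, Finset.mem_image,
        Prod.mk.injEq]
      constructor
      · rintro ⟨⟨⟨-, -⟩, hab⟩, rfl⟩; exact ⟨a, hab, rfl, rfl⟩
      · rintro ⟨i, hi, rfl, rfl⟩; omega
    rw [heq, Finset.card_image_of_injective _
      (fun a b hab => (Prod.mk.injEq _ _ _ _).mp hab |>.1), Finset.card_range]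
  rw [h1, Finset.sum_range_id_mul_two]

/-- Law of large numbers for doubly-indexed partially-dependent random variables:
the centered average converges to `0` in probability. -/
theorem stmt1
    {Ω : Type*} [MeasureSpace Ω] [IsProbabilityMeasure (ℙ : Measure Ω)]
    (Z : ℕ → ℕ → Ω → ℝ) (h : ℝ → ℝ) (hm : Measurable h)
    (hZm : ∀ i j, Measurable (Z i j))
    (hL2 : ∀ i j, MemLp (fun ω => h (Z i j ω)) 2 ℙ)
    (hindep : ∀ i j k l, ({i, j} : Set ℕ) ∩ ({k, l} : Set ℕ) = ∅ →
      IndepFun (Z i j) (Z k l) ℙ)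
    (C : ℝ)
    (hC : ∀ i j, ∫ ω, (h (Z i j ω)) ^ 2 ∂ℙ ≤ C) :
    ∀ ε : ℝ, 0 < ε →
      Tendsto (fun n : ℕ =>
        ℙ {ω | ε < |((pairIdx n).card : ℝ)⁻¹ *
          ∑ p ∈ pairIdx n, (h (Z p.1 p.2 ω) - ∫ ω', h (Z p.1 p.2 ω') ∂ℙ)|})
        atTop (nhds 0) := by
  intro ε hε
  have hX2 : ∀ p : ℕ × ℕ, MemLp (fun ω => h (Z p.1 p.2 ω)) 2 ℙ := fun p => hL2 p.1 p.2
  set Y : ℕ × ℕ → Ω → ℝ :=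
    fun p ω => h (Z p.1 p.2 ω) - ∫ ω', h (Z p.1 p.2 ω') ∂ℙ with hYdef
  have hY2 : ∀ p, MemLp (Y p) 2 ℙ := fun p => (hX2 p).sub (memLp_const _)
  have hY0 : ∀ p, ∫ ω, Y p ω ∂ℙ = 0 := by
    intro p
    simp only [hYdef]
    rw [integral_sub ((hX2 p).integrable one_le_two) (integrable_const _)]
    simp
  have hC0 : (0:ℝ) ≤ C := le_trans (integral_nonneg fun ω => sq_nonneg _) (hC 0 1)
  have hYsq : ∀ p, ∫ ω, Y p ω ^ 2 ∂ℙ ≤ C := by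
    intro p
    have h1 : variance (fun ω => h (Z p.1 p.2 ω)) ℙ = ∫ ω, Y p ω ^ 2 ∂ℙ := by
      rw [variance_eq_integral (hX2 p).aestronglyMeasurable.aemeasurable]
    have h2 := variance_le_expectation_sq (μ := ℙ) (hX2 p).aestronglyMeasurable
    calc ∫ ω, Y p ω ^ 2 ∂ℙ = variance (fun ω => h (Z p.1 p.2 ω)) ℙ := h1.symm
      _ ≤ ∫ ω, (h (Z p.1 p.2 ω)) ^ 2 ∂ℙ := h2
      _ ≤ C := hC p.1 p.2
  have hmul : ∀ p q, Integrable (fun ω => Y p ω * Y q ω) ℙ := by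
    intro p q
    have hsm := (hY2 q).smul (r := 1) (hY2 p)
    rw [smul_eq_mul] at hsm
    have h2 := memLp_one_iff_integrable.mp hsm
    exact h2
  have hcov : ∀ p q, ∫ ω, Y p ω * Y q ω ∂ℙ ≤ C := by
    intro p q
    have hxy : ∀ x y : ℝ, x * y ≤ (x ^ 2 + y ^ 2) / 2 := fun x y => by
      nlinarith [sq_nonneg (x - y)]
    have hpt : ∀ ω, Y p ω * Y q ω ≤ (Y p ω ^ 2 + Y q ω ^ 2) / 2 := fun ω => hxy _ _
    have hInt2 : Integrable (fun ω => (Y p ω ^ 2 + Y q ω ^ 2) / 2) ℙ :=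
      ((hY2 p).integrable_sq.add (hY2 q).integrable_sq).div_const 2
    have hmono := integral_mono (hmul p q) hInt2 hpt
    rw [integral_div, integral_add (hY2 p).integrable_sq (hY2 q).integrable_sq] at hmono
    linarith [hYsq p, hYsq q]
  have hzero : ∀ p q : ℕ × ℕ, ¬(q.1 = p.1 ∨ q.1 = p.2 ∨ q.2 = p.1 ∨ q.2 = p.2) →
      ∫ ω, Y p ω * Y q ω ∂ℙ = 0 := by
    intro p q hne
    push_neg at hne
    obtain ⟨h1, h2, h3, h4⟩ := hne
    have hdisj : ({p.1, p.2} : Set ℕ) ∩ ({q.1, q.2} : Set ℕ) = ∅ := by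
      ext x
      simp only [Set.mem_inter_iff, Set.mem_insert_iff, Set.mem_singleton_iff,
        Set.mem_empty_iff_false, iff_false, not_and]
      rintro (rfl | rfl) (hx | hx) <;> omega
    have hZI := hindep p.1 p.2 q.1 q.2 hdisj
    have hXI : IndepFun (fun ω => h (Z p.1 p.2 ω)) (fun ω => h (Z q.1 q.2 ω)) ℙ :=
      hZI.comp hm hm
    have hYI : IndepFun (Y p) (Y q) ℙ :=
      hXI.comp (measurable_id.sub_const _) (measurable_id.sub_const _)
    have hIM : ∫ ω, Y p ω * Y q ω ∂ℙ = (∫ ω, Y p ω ∂ℙ) * ∫ ω, Y q ω ∂ℙ :=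
      hYI.integral_mul_eq_mul_integral (hY2 p).aestronglyMeasurable (hY2 q).aestronglyMeasurable
    rw [hIM, hY0 p, hY0 q, mul_zero]
  -- key finite-n bound
  have key : ∀ n : ℕ, 2 ≤ n →
      ℙ {ω | ε < |((pairIdx n).card : ℝ)⁻¹ *
          ∑ p ∈ pairIdx n, (h (Z p.1 p.2 ω) - ∫ ω', h (Z p.1 p.2 ω') ∂ℙ)|}
        ≤ ENNReal.ofReal ((8 * C / ε ^ 2) * ((n : ℝ) - 1)⁻¹) := by
    intro n hn
    have hn2 : (2:ℝ) ≤ (n:ℝ) := by exact_mod_cast hn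
    set I := pairIdx n with hI
    set c : ℝ := (I.card : ℝ) with hc
    have hc2 : c * 2 = (n:ℝ) * ((n:ℝ) - 1) := by
      have hcard := card_pairIdx n
      have h1 : (((pairIdx n).card * 2 : ℕ) : ℝ) = ((n * (n - 1) : ℕ) : ℝ) := by
        exact_mod_cast hcard
      rw [hc, hI]
      push_cast [Nat.cast_sub (by omega : 1 ≤ n)] at h1
      linarith
    have hcpos : (0:ℝ) < c := by nlinarith
    set a : ℝ := c⁻¹ with ha
    set T : Ω → ℝ := fun ω => a * ∑ p ∈ I, h (Z p.1 p.2 ω) with hT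
    have hT2 : MemLp T 2 ℙ := (memLp_finset_sum I fun p _ => hX2 p).const_mul a
    have hTE : ∫ ω, T ω ∂ℙ = a * ∑ p ∈ I, ∫ ω', h (Z p.1 p.2 ω') ∂ℙ := by
      simp only [hT]
      rw [integral_const_mul, integral_finset_sum I fun p _ => (hX2 p).integrable one_le_two]
    have hset : {ω | ε < |((pairIdx n).card : ℝ)⁻¹ *
          ∑ p ∈ pairIdx n, (h (Z p.1 p.2 ω) - ∫ ω', h (Z p.1 p.2 ω') ∂ℙ)|}
        ⊆ {ω | ε ≤ |T ω - ∫ ω', T ω' ∂ℙ|} := by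
      intro ω hω
      simp only [Set.mem_setOf_eq] at hω ⊢
      have heq : T ω - ∫ ω', T ω' ∂ℙ = ((pairIdx n).card : ℝ)⁻¹ *
          ∑ p ∈ pairIdx n, (h (Z p.1 p.2 ω) - ∫ ω', h (Z p.1 p.2 ω') ∂ℙ) := by
        rw [hTE]
        simp only [hT, ← hI, ← hc, ← ha]
        rw [Finset.sum_sub_distrib]
        ring
      rw [heq]; exact hω.le
    have hvar : variance T ℙ ≤ 4 * (n:ℝ) * C * a := by
      have hveq : variance T ℙ = a ^ 2 * ∫ ω, (∑ p ∈ I, Y p ω) ^ 2 ∂ℙ := by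
        have hpt : ∀ ω, (T ω - ∫ ω', T ω' ∂ℙ) ^ 2
            = a ^ 2 * (∑ p ∈ I, Y p ω) ^ 2 := by
          intro ω
          rw [hTE]
          simp only [hT, hYdef]
          rw [Finset.sum_sub_distrib]
          ring
        rw [← integral_const_mul]
        rw [show variance T ℙ = ∫ ω, ((T - fun _ => ∫ ω', T ω' ∂ℙ) ^ 2 : Ω → ℝ) ω ∂ℙ from
          variance_eq_integral hT2.aestronglyMeasurable.aemeasurable]
        refine integral_congr_ae (ae_of_all _ fun ω => ?_)
        simp only [Pi.pow_apply, Pi.sub_apply]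
        exact hpt ω
      have hsum : ∫ ω, (∑ p ∈ I, Y p ω) ^ 2 ∂ℙ
          = ∑ p ∈ I, ∑ q ∈ I, ∫ ω, Y p ω * Y q ω ∂ℙ := by
        have hpt : ∀ ω, (∑ p ∈ I, Y p ω) ^ 2 = ∑ p ∈ I, ∑ q ∈ I, Y p ω * Y q ω := by
          intro ω; rw [sq, Finset.sum_mul_sum]
        simp_rw [hpt]
        rw [integral_finset_sum I fun p _ => integrable_finset_sum I fun q _ => hmul p q]
        exact Finset.sum_congr rfl fun p _ => integral_finset_sum I fun q _ => hmul p q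
      have hper : ∀ p ∈ I, ∑ q ∈ I, ∫ ω, Y p ω * Y q ω ∂ℙ ≤ 4 * (n:ℝ) * C := by
        intro p hp
        classical
        have hfil : ∑ q ∈ I.filter (fun q => q.1 = p.1 ∨ q.1 = p.2 ∨ q.2 = p.1 ∨ q.2 = p.2),
              (∫ ω, Y p ω * Y q ω ∂ℙ)
            = ∑ q ∈ I, ∫ ω, Y p ω * Y q ω ∂ℙ := by
          refine Finset.sum_filter_of_ne ?_
          intro q hq hne
          by_contra hpred
          exact hne (hzero p q hpred)
        have hsub : I.filter (fun q => q.1 = p.1 ∨ q.1 = p.2 ∨ q.2 = p.1 ∨ q.2 = p.2)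
            ⊆ (({p.1, p.2} : Finset ℕ) ×ˢ Finset.range n)
              ∪ (Finset.range n ×ˢ ({p.1, p.2} : Finset ℕ)) := by
          intro q hq
          simp only [hI, pairIdx, Finset.mem_filter, Finset.mem_product, Finset.mem_range] at hq
          obtain ⟨⟨⟨hq1, hq2⟩, -⟩, hpred⟩ := hq
          simp only [Finset.mem_union, Finset.mem_product, Finset.mem_insert,
            Finset.mem_singleton, Finset.mem_range]
          tauto
        have hcard : ((I.filter
            (fun q => q.1 = p.1 ∨ q.1 = p.2 ∨ q.2 = p.1 ∨ q.2 = p.2)).card : ℝ) ≤ 4 * n := by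
          have h1 := Finset.card_le_card hsub
          have h2 := Finset.card_union_le (({p.1, p.2} : Finset ℕ) ×ˢ Finset.range n)
            (Finset.range n ×ˢ ({p.1, p.2} : Finset ℕ))
          have h3 : ({p.1, p.2} : Finset ℕ).card ≤ 2 :=
            le_trans (Finset.card_insert_le _ _) (by simp)
          have h4 : ((({p.1, p.2} : Finset ℕ) ×ˢ Finset.range n).card
              + ((Finset.range n ×ˢ ({p.1, p.2} : Finset ℕ)).card)) ≤ 4 * n := by
            rw [Finset.card_product, Finset.card_product, Finset.card_range]
            nlinarith
          exact_mod_cast le_trans h1 (le_trans h2 h4)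
        calc ∑ q ∈ I, ∫ ω, Y p ω * Y q ω ∂ℙ
            = ∑ q ∈ I.filter (fun q => q.1 = p.1 ∨ q.1 = p.2 ∨ q.2 = p.1 ∨ q.2 = p.2),
                ∫ ω, Y p ω * Y q ω ∂ℙ := hfil.symm
          _ ≤ (I.filter (fun q => q.1 = p.1 ∨ q.1 = p.2 ∨ q.2 = p.1 ∨ q.2 = p.2)).card • C :=
              Finset.sum_le_card_nsmul _ _ C fun q _ => hcov p q
          _ = ((I.filter (fun q => q.1 = p.1 ∨ q.1 = p.2 ∨ q.2 = p.1 ∨ q.2 = p.2)).card : ℝ)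
                * C := nsmul_eq_mul _ _
          _ ≤ 4 * (n:ℝ) * C := mul_le_mul_of_nonneg_right hcard hC0
      have hdouble : ∑ p ∈ I, ∑ q ∈ I, ∫ ω, Y p ω * Y q ω ∂ℙ ≤ c * (4 * (n:ℝ) * C) := by
        calc ∑ p ∈ I, ∑ q ∈ I, ∫ ω, Y p ω * Y q ω ∂ℙ
            ≤ ∑ _p ∈ I, 4 * (n:ℝ) * C := Finset.sum_le_sum hper
          _ = c * (4 * (n:ℝ) * C) := by rw [Finset.sum_const, nsmul_eq_mul, hc]
      have hac : a * c = 1 := inv_mul_cancel₀ hcpos.ne'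
      calc variance T ℙ = a ^ 2 * ∫ ω, (∑ p ∈ I, Y p ω) ^ 2 ∂ℙ := hveq
        _ = a ^ 2 * ∑ p ∈ I, ∑ q ∈ I, ∫ ω, Y p ω * Y q ω ∂ℙ := by rw [hsum]
        _ ≤ a ^ 2 * (c * (4 * (n:ℝ) * C)) :=
            mul_le_mul_of_nonneg_left hdouble (sq_nonneg a)
        _ = (a * c) * (4 * (n:ℝ) * C * a) := by ring
        _ = 4 * (n:ℝ) * C * a := by rw [hac, one_mul]
    have hfinal : variance T ℙ / ε ^ 2 ≤ (8 * C / ε ^ 2) * ((n:ℝ) - 1)⁻¹ := by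
      have hn1 : (0:ℝ) < (n:ℝ) - 1 := by linarith
      have heqa : 4 * (n:ℝ) * C * a = 8 * C * ((n:ℝ) - 1)⁻¹ := by
        rw [ha]
        field_simp
        nlinarith [hc2]
      have : variance T ℙ ≤ 8 * C * ((n:ℝ) - 1)⁻¹ := heqa ▸ hvar
      calc variance T ℙ / ε ^ 2 ≤ (8 * C * ((n:ℝ) - 1)⁻¹) / ε ^ 2 := by
            exact (div_le_div_iff_of_pos_right (by positivity)).mpr this
        _ = (8 * C / ε ^ 2) * ((n:ℝ) - 1)⁻¹ := by ring
    calc ℙ {ω | ε < |((pairIdx n).card : ℝ)⁻¹ *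
          ∑ p ∈ pairIdx n, (h (Z p.1 p.2 ω) - ∫ ω', h (Z p.1 p.2 ω') ∂ℙ)|}
        ≤ ℙ {ω | ε ≤ |T ω - ∫ ω', T ω' ∂ℙ|} := measure_mono hset
      _ ≤ ENNReal.ofReal (variance T ℙ / ε ^ 2) := meas_ge_le_variance_div_sq hT2 hε
      _ ≤ ENNReal.ofReal ((8 * C / ε ^ 2) * ((n:ℝ) - 1)⁻¹) := ENNReal.ofReal_le_ofReal hfinal
  -- conclude
  have hbound0 : Tendsto (fun n : ℕ => ENNReal.ofReal ((8 * C / ε ^ 2) * ((n:ℝ) - 1)⁻¹))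
      atTop (nhds 0) := by
    rw [← ENNReal.ofReal_zero]
    apply ENNReal.tendsto_ofReal
    have h1 : Tendsto (fun n : ℕ => ((n:ℝ) - 1)⁻¹) atTop (nhds 0) := by
      apply Tendsto.inv_tendsto_atTop
      have := tendsto_atTop_add_const_right atTop (-1 : ℝ) tendsto_natCast_atTop_atTop
      simpa [sub_eq_add_neg] using this
    simpa using h1.const_mul (8 * C / ε ^ 2)
  refine tendsto_of_tendsto_of_tendsto_of_le_of_le' tendsto_const_nhds hbound0 ?_ ?_
  · exact Filter.Eventually.of_forall fun n => zero_le
  · filter_upwards [eventually_ge_atTop 2] with n hn using key n hn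
end

section
/- Combine the decomposition and the Lyapunov bound: under assumptions (a) $g = \mu_* + \eta_*$ with $\mu_*,\eta_* \ge 0$, (b) $\alpha := E_\nu(\eta_*) > 0$, (c) $E_\nu(\eta_* \mu_\theta^{\beta_0}) < \varepsilon$, and (d) $0 < \beta \le \beta_0$, the moment $\beta$-score satisfies $\left| u_\beta(g,\mu_\theta;\nu) - u_\beta(\mu_*,\mu_\theta;\nu) - \alpha\beta^{-1} \right| \le \alpha^{1-\beta/\beta_0}\,\beta^{-1}\,\varepsilon^{\beta/\beta_0}$. -/
open MeasureTheory

/-- The β-score `u_β(g,f;ν)` over nonnegative functions. -/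
noncomputable def uscore {Z : Type*} [MeasurableSpace Z] (ν : Measure Z)
    (β : ℝ) (g f : Z → ℝ) : ℝ :=
  ∫ z, (-(g z) * ((f z) ^ β - 1) / β + (f z) ^ (1 + β) / (1 + β)) ∂ν

/-- Lyapunov / Hölder: `∫ η μθ^β ≤ (∫ η μθ^{β0})^{β/β0} (∫ η)^{1-β/β0}`. -/
lemma lyapunov_aux
    {X : Type*} [MeasurableSpace X] (ν : Measure X)
    (η μθ : X → ℝ)
    (hηnn : ∀ x, 0 ≤ η x) (hμnn : ∀ x, 0 ≤ μθ x)
    (β β0 : ℝ) (hβ : 0 < β) (hlt : β < β0)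
    (hintη : Integrable η ν)
    (hintβ0 : Integrable (fun x => η x * μθ x ^ β0) ν) :
    ∫ x, η x * μθ x ^ β ∂ν
      ≤ (∫ x, η x * μθ x ^ β0 ∂ν) ^ (β / β0) * (∫ x, η x ∂ν) ^ (1 - β / β0) := by
  have hβ0 : 0 < β0 := hβ.trans hlt
  set t : ℝ := β / β0 with ht_def
  have ht0 : 0 < t := div_pos hβ hβ0
  have ht1 : t < 1 := (div_lt_one hβ0).2 hlt
  have h1t : 0 < 1 - t := by linarith
  set h : X → ℝ := fun x => η x * μθ x ^ β0 with hh_def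
  have hhnn : ∀ x, 0 ≤ h x := fun x =>
    mul_nonneg (hηnn x) (Real.rpow_nonneg (hμnn x) _)
  set f : X → ℝ := fun x => h x ^ t with hf_def
  set g : X → ℝ := fun x => η x ^ (1 - t) with hg_def
  have hpq : (1 / t).HolderConjugate (1 / (1 - t)) := by
    rw [Real.holderConjugate_iff]; constructor
    · rw [lt_div_iff₀ ht0]; linarith
    · rw [one_div, one_div, inv_inv, inv_inv]; ring
  -- Memℒp facts
  have hmemh : MemLp h 1 ν := memLp_one_iff_integrable.2 hintβ0
  have hmemη : MemLp η 1 ν := memLp_one_iff_integrable.2 hintη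
  have hq0 : (ENNReal.ofReal t) ≠ 0 := (ENNReal.ofReal_pos.2 ht0).ne'
  have hq0' : (ENNReal.ofReal (1 - t)) ≠ 0 := (ENNReal.ofReal_pos.2 h1t).ne'
  have hmemf : MemLp f (ENNReal.ofReal (1 / t)) ν := by
    have := (memLp_norm_rpow_iff (q := ENNReal.ofReal t) (p := 1)
      hmemh.aestronglyMeasurable hq0 ENNReal.ofReal_ne_top).2 hmemh
    have heq : (fun x => ‖h x‖ ^ (ENNReal.ofReal t).toReal) = f := by
      funext x
      rw [Real.norm_of_nonneg (hhnn x), ENNReal.toReal_ofReal ht0.le]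
    rw [heq] at this
    convert this using 1
    rw [one_div, ENNReal.ofReal_inv_of_pos ht0, one_div]
  have hmemg : MemLp g (ENNReal.ofReal (1 / (1 - t))) ν := by
    have := (memLp_norm_rpow_iff (q := ENNReal.ofReal (1 - t)) (p := 1)
      hmemη.aestronglyMeasurable hq0' ENNReal.ofReal_ne_top).2 hmemη
    have heq : (fun x => ‖η x‖ ^ (ENNReal.ofReal (1 - t)).toReal) = g := by
      funext x
      rw [Real.norm_of_nonneg (hηnn x), ENNReal.toReal_ofReal h1t.le]
    rw [heq] at this
    convert this using 1
    rw [one_div, ENNReal.ofReal_inv_of_pos h1t, one_div]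
  have hfnn : 0 ≤ᵐ[ν] f := Filter.Eventually.of_forall fun x =>
    Real.rpow_nonneg (hhnn x) _
  have hgnn : 0 ≤ᵐ[ν] g := Filter.Eventually.of_forall fun x =>
    Real.rpow_nonneg (hηnn x) _
  have holder := integral_mul_le_Lp_mul_Lq_of_nonneg (μ := ν) hpq hfnn hgnn hmemf hmemg
  -- rewrite the left side
  have hLHS : (∫ x, f x * g x ∂ν) = ∫ x, η x * μθ x ^ β ∂ν := by
    refine integral_congr_ae (Filter.Eventually.of_forall fun x => ?_)
    show h x ^ t * η x ^ (1 - t) = η x * μθ x ^ β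
    have h1 : h x ^ t = η x ^ t * μθ x ^ β := by
      rw [hh_def]
      show (η x * μθ x ^ β0) ^ t = _
      rw [Real.mul_rpow (hηnn x) (Real.rpow_nonneg (hμnn x) _),
        ← Real.rpow_mul (hμnn x)]
      rw [ht_def]
      congr 1
      field_simp
    rw [h1]
    have h2 : η x ^ t * μθ x ^ β * η x ^ (1 - t)
        = (η x ^ t * η x ^ (1 - t)) * μθ x ^ β := by ring
    rw [h2, ← Real.rpow_add' (hηnn x) (by norm_num)]
    norm_num
  -- rewrite the right side
  have hRf : (∫ x, f x ^ (1 / t) ∂ν) = ∫ x, h x ∂ν := by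
    refine integral_congr_ae (Filter.Eventually.of_forall fun x => ?_)
    show (h x ^ t) ^ (1 / t) = h x
    rw [← Real.rpow_mul (hhnn x), mul_one_div, div_self ht0.ne', Real.rpow_one]
  have hRg : (∫ x, g x ^ (1 / (1 - t)) ∂ν) = ∫ x, η x ∂ν := by
    refine integral_congr_ae (Filter.Eventually.of_forall fun x => ?_)
    show (η x ^ (1 - t)) ^ (1 / (1 - t)) = η x
    rw [← Real.rpow_mul (hηnn x), mul_one_div, div_self h1t.ne', Real.rpow_one]
  rw [hLHS, hRf, hRg, one_div_one_div, one_div_one_div] at holder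
  exact holder

/-- Population-level robustness bound: under contamination `g = μ⋆ + η⋆` with
`α = E_ν(η⋆) > 0`, `E_ν(η⋆ μ_θ^{β₀}) < ε`, and `0 < β ≤ β₀`,
`|u_β(g,μ_θ;ν) - u_β(μ⋆,μ_θ;ν) - α β⁻¹| ≤ α^{1-β/β₀} β⁻¹ ε^{β/β₀}`. -/
theorem stmt8
    {X : Type*} [MeasurableSpace X] (ν : Measure X) [IsProbabilityMeasure ν]
    (μstar η μθ : X → ℝ)
    (hμsnn : ∀ x, 0 ≤ μstar x) (hηnn : ∀ x, 0 ≤ η x) (hμnn : ∀ x, 0 ≤ μθ x)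
    (hηm : Measurable η) (hμm : Measurable μθ)
    (β β0 ε α : ℝ) (hβ : 0 < β) (hββ0 : β ≤ β0) (hε : 0 < ε)
    (hα : α = ∫ x, η x ∂ν) (hαpos : 0 < α)
    (hintη : Integrable η ν)
    (hintβ0 : Integrable (fun x => η x * μθ x ^ β0) ν)
    (hintβ : Integrable (fun x => η x * μθ x ^ β) ν)
    (hint1 : Integrable
      (fun x => -(μstar x + η x) * ((μθ x) ^ β - 1) / β + (μθ x) ^ (1 + β) / (1 + β)) ν)
    (hint2 : Integrable
      (fun x => -(μstar x) * ((μθ x) ^ β - 1) / β + (μθ x) ^ (1 + β) / (1 + β)) ν)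
    (hconstraint : ∫ x, η x * μθ x ^ β0 ∂ν < ε) :
    |uscore ν β (fun x => μstar x + η x) μθ - uscore ν β μstar μθ - α * β⁻¹|
      ≤ α ^ (1 - β / β0) * β⁻¹ * ε ^ (β / β0) := by
  have hβ0 : 0 < β0 := lt_of_lt_of_le hβ hββ0
  set I : ℝ := ∫ x, η x * μθ x ^ β ∂ν with hI_def
  set J : ℝ := ∫ x, η x * μθ x ^ β0 ∂ν with hJ_def
  have hInn : 0 ≤ I := integral_nonneg fun x =>
    mul_nonneg (hηnn x) (Real.rpow_nonneg (hμnn x) _)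
  have hJnn : 0 ≤ J := integral_nonneg fun x =>
    mul_nonneg (hηnn x) (Real.rpow_nonneg (hμnn x) _)
  -- Step 1: the decomposition
  have hdiff : uscore ν β (fun x => μstar x + η x) μθ - uscore ν β μstar μθ - α * β⁻¹
      = -(β⁻¹ * I) := by
    have h1 : uscore ν β (fun x => μstar x + η x) μθ - uscore ν β μstar μθ
        = ∫ x, (η x * β⁻¹ - η x * μθ x ^ β * β⁻¹) ∂ν := by
      unfold uscore
      rw [← integral_sub hint1 hint2]
      refine integral_congr_ae (Filter.Eventually.of_forall fun x => ?_)
      field_simp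
      ring
    rw [h1, integral_sub (hintη.mul_const _) (hintβ.mul_const _),
      integral_mul_const, integral_mul_const, ← hα, ← hI_def]
    ring
  rw [hdiff, abs_neg, abs_of_nonneg (mul_nonneg (inv_nonneg.2 hβ.le) hInn)]
  -- Step 2: I ≤ J^{β/β0} * α^{1-β/β0} ≤ ε^{β/β0} * α^{1-β/β0}
  have hkey : I ≤ J ^ (β / β0) * α ^ (1 - β / β0) := by
    rcases eq_or_lt_of_le hββ0 with heq | hlt
    · subst heq
      simp only [div_self hβ.ne', Real.rpow_one, sub_self, Real.rpow_zero, mul_one]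
      rw [hI_def, hJ_def]
    · rw [hα]
      exact lyapunov_aux ν η μθ hηnn hμnn β β0 hβ hlt hintη hintβ0
  have hJle : J ^ (β / β0) ≤ ε ^ (β / β0) :=
    Real.rpow_le_rpow hJnn hconstraint.le (div_nonneg hβ.le hβ0.le)
  have hαnn : 0 ≤ α ^ (1 - β / β0) := Real.rpow_nonneg hαpos.le _
  calc β⁻¹ * I ≤ β⁻¹ * (J ^ (β / β0) * α ^ (1 - β / β0)) := by
        exact mul_le_mul_of_nonneg_left hkey (inv_nonneg.2 hβ.le)
    _ ≤ β⁻¹ * (ε ^ (β / β0) * α ^ (1 - β / β0)) := by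
        exact mul_le_mul_of_nonneg_left (mul_le_mul_of_nonneg_right hJle hαnn)
          (inv_nonneg.2 hβ.le)
    _ = α ^ (1 - β / β0) * β⁻¹ * ε ^ (β / β0) := by ring
end

section
/- Suppose additionally that the model is correctly specified: there exists $\theta_* \in \Theta_\varepsilon$ with $\mu_{\theta_*} = \mu_*$ ($\nu$-a.e.). Then for any $\theta \in \Theta_\varepsilon := \{\theta : E_\nu(\eta_* \mu_\theta^{\beta_0}) < \varepsilon\}$, $u_\beta(g,\mu_\theta;\nu) \ge u_\beta(g,\mu_{\theta_*};\nu) - 2\,\alpha^{1-\beta/\beta_0}\beta^{-1}\varepsilon^{\beta/\beta_0} + \big(u_\beta(\mu_*,\mu_\theta;\nu) - u_\beta(\mu_*,\mu_*;\nu)\big)$; in particular, any minimizer of the contaminated score $u_\beta(g,\cdot;\nu)$ over $\Theta_\varepsilon$ has $\beta$-divergence from $\mu_*$ at most $2\,\alpha^{1-\beta/\beta_0}\beta^{-1}\varepsilon^{\beta/\beta_0}$. -/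
open MeasureTheory

lemma memLp_of_int {X : Type*} [MeasurableSpace X] {ν : Measure X}
    {f : X → ℝ} (hf : Measurable f) (hnn : ∀ x, 0 ≤ f x) {p : ℝ} (hp : 0 < p)
    (hint : Integrable (fun x => f x ^ p) ν) : MemLp f (ENNReal.ofReal p) ν := by
  have hq0 : (ENNReal.ofReal p) ≠ 0 := by simp [hp, hp.le, ENNReal.ofReal_eq_zero, not_le]
  have hqt : (ENNReal.ofReal p) ≠ ⊤ := ENNReal.ofReal_ne_top
  have := (memLp_norm_rpow_iff (μ := ν) (p := ENNReal.ofReal p) (q := ENNReal.ofReal p)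
    hf.aestronglyMeasurable hq0 hqt)
  rw [ENNReal.div_self hq0 hqt] at this
  refine this.mp ?_
  rw [memLp_one_iff_integrable]
  have : (fun x => ‖f x‖ ^ (ENNReal.ofReal p).toReal) = fun x => f x ^ p := by
    funext x
    rw [Real.norm_of_nonneg (hnn x), ENNReal.toReal_ofReal hp.le]
  rw [this]
  exact hint

lemma holder_bd {X : Type*} [MeasurableSpace X] {ν : Measure X} {η f : X → ℝ}
    (hηm : Measurable η) (hfm : Measurable f)
    (hηnn : ∀ x, 0 ≤ η x) (hfnn : ∀ x, 0 ≤ f x)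
    {β β0 : ℝ} (hβ : 0 < β) (hlt : β < β0)
    (hintη : Integrable η ν)
    (hintβ0 : Integrable (fun x => η x * f x ^ β0) ν) :
    ∫ x, η x * f x ^ β ∂ν
      ≤ (∫ x, η x * f x ^ β0 ∂ν) ^ (β / β0) * (∫ x, η x ∂ν) ^ (1 - β / β0) := by
  have hβ0 : 0 < β0 := hβ.trans hlt
  set p : ℝ := β0 / β with hp_def
  set q : ℝ := p / (p - 1) with hq_def
  have hp1 : 1 < p := (one_lt_div hβ).mpr hlt
  have hp0 : 0 < p := lt_trans one_pos hp1
  have hpq : p.HolderConjugate q := by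
    exact (Real.holderConjugate_iff_eq_conjExponent hp1).mpr hq_def
  have hq0 : 0 < q := hpq.symm.pos
  set F : X → ℝ := fun x => η x ^ p⁻¹ * f x ^ β with hF_def
  set G : X → ℝ := fun x => η x ^ q⁻¹ with hG_def
  have hFG : ∀ x, F x * G x = η x * f x ^ β := by
    intro x
    have h : η x ^ p⁻¹ * η x ^ q⁻¹ = η x := by
      rw [← Real.rpow_add' (hηnn x) (by rw [hpq.inv_add_inv_eq_one]; norm_num),
        hpq.inv_add_inv_eq_one, Real.rpow_one]
    calc η x ^ p⁻¹ * f x ^ β * (η x ^ q⁻¹)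
        = (η x ^ p⁻¹ * η x ^ q⁻¹) * f x ^ β := by ring
      _ = η x * f x ^ β := by rw [h]
  have hβp : β * p = β0 := by
    rw [hp_def]; field_simp
  have hFp : ∀ x, F x ^ p = η x * f x ^ β0 := by
    intro x
    show (η x ^ p⁻¹ * f x ^ β) ^ p = _
    rw [Real.mul_rpow (Real.rpow_nonneg (hηnn x) _) (Real.rpow_nonneg (hfnn x) _),
      ← Real.rpow_mul (hηnn x), ← Real.rpow_mul (hfnn x),
      inv_mul_cancel₀ hp0.ne', Real.rpow_one, hβp]
  have hGq : ∀ x, G x ^ q = η x := by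
    intro x
    show (η x ^ q⁻¹) ^ q = _
    rw [← Real.rpow_mul (hηnn x), inv_mul_cancel₀ hq0.ne', Real.rpow_one]
  have hFm : Measurable F := (hηm.pow_const _).mul (hfm.pow_const _)
  have hGm : Measurable G := hηm.pow_const _
  have hFnn : ∀ x, 0 ≤ F x :=
    fun x => mul_nonneg (Real.rpow_nonneg (hηnn x) _) (Real.rpow_nonneg (hfnn x) _)
  have hGnn : ∀ x, 0 ≤ G x := fun x => Real.rpow_nonneg (hηnn x) _
  have hFint : Integrable (fun x => F x ^ p) ν := by
    have : (fun x => F x ^ p) = fun x => η x * f x ^ β0 := funext hFp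
    rw [this]; exact hintβ0
  have hGint : Integrable (fun x => G x ^ q) ν := by
    have : (fun x => G x ^ q) = η := funext hGq
    rw [this]; exact hintη
  have hFLp : MemLp F (ENNReal.ofReal p) ν := memLp_of_int hFm hFnn hp0 hFint
  have hGLp : MemLp G (ENNReal.ofReal q) ν := memLp_of_int hGm hGnn hq0 hGint
  have h := integral_mul_le_Lp_mul_Lq_of_nonneg hpq
    (Filter.Eventually.of_forall hFnn) (Filter.Eventually.of_forall hGnn) hFLp hGLp
  have e1 : ∫ x, F x * G x ∂ν = ∫ x, η x * f x ^ β ∂ν :=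
    integral_congr_ae (Filter.Eventually.of_forall fun x => hFG x)
  have e2 : ∫ x, F x ^ p ∂ν = ∫ x, η x * f x ^ β0 ∂ν :=
    integral_congr_ae (Filter.Eventually.of_forall hFp)
  have e3 : ∫ x, G x ^ q ∂ν = ∫ x, η x ∂ν :=
    integral_congr_ae (Filter.Eventually.of_forall hGq)
  rw [e1, e2, e3] at h
  have hip : 1 / p = β / β0 := by rw [hp_def]; field_simp
  have hiq : 1 / q = 1 - β / β0 := by
    have := hpq.inv_add_inv_eq_one
    rw [one_div, ← hip, one_div]
    linarith
  rw [hip, hiq] at h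
  exact h

lemma decomp {X : Type*} [MeasurableSpace X] {ν : Measure X} {μstar η f : X → ℝ}
    {β : ℝ} (hβ : 0 < β)
    (hintη : Integrable η ν)
    (hintβf : Integrable (fun x => η x * f x ^ β) ν)
    (hints : Integrable
      (fun x => -(μstar x) * ((f x) ^ β - 1) / β + (f x) ^ (1 + β) / (1 + β)) ν) :
    uscore ν β (fun x => μstar x + η x) f
      = uscore ν β μstar f + ((∫ x, η x ∂ν) - ∫ x, η x * f x ^ β ∂ν) / β := by
  have hint2 : Integrable (fun x => (η x - η x * f x ^ β) / β) ν :=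
    (hintη.sub hintβf).div_const β
  have key : (fun z => -(μstar z + η z) * ((f z) ^ β - 1) / β + (f z) ^ (1 + β) / (1 + β))
      = fun z => (-(μstar z) * ((f z) ^ β - 1) / β + (f z) ^ (1 + β) / (1 + β))
        + (η z - η z * f z ^ β) / β := by
    funext z; ring
  rw [uscore, key, integral_add hints hint2, uscore, integral_div,
    integral_sub hintη hintβf]

/-- Under correct specification (`μ_{θ⋆} = μ⋆` ν-a.e. with `θ⋆ ∈ Θ_ε`), for any
`θ ∈ Θ_ε` the contaminated score satisfies
`u_β(g,μ_θ) ≥ u_β(g,μ_{θ⋆}) - 2 α^{1-β/β₀} β⁻¹ ε^{β/β₀} + D_β(μ⋆,μ_θ)`;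
in particular any minimizer over `Θ_ε` has β-divergence from `μ⋆` at most
`2 α^{1-β/β₀} β⁻¹ ε^{β/β₀}`. -/
theorem stmt9
    {X Θ : Type*} [MeasurableSpace X] (ν : Measure X) [IsProbabilityMeasure ν]
    (μstar η : X → ℝ) (μ : Θ → X → ℝ)
    (hμsnn : ∀ x, 0 ≤ μstar x) (hηnn : ∀ x, 0 ≤ η x)
    (hμnn : ∀ θ' x, 0 ≤ μ θ' x)
    (hηm : Measurable η) (hμsm : Measurable μstar) (hμm : ∀ θ', Measurable (μ θ'))
    (β β0 ε α : ℝ) (hβ : 0 < β) (hββ0 : β ≤ β0) (hε : 0 < ε)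
    (hα : α = ∫ x, η x ∂ν) (hαpos : 0 < α)
    (g : X → ℝ) (hg : g = fun x => μstar x + η x)
    (θ θs : Θ)
    (hθ : ∫ x, η x * μ θ x ^ β0 ∂ν < ε)
    (hθs : ∫ x, η x * μ θs x ^ β0 ∂ν < ε)
    (hspec : μ θs =ᵐ[ν] μstar)
    (hintη : Integrable η ν)
    (hintβ0 : ∀ θ' : Θ, Integrable (fun x => η x * μ θ' x ^ β0) ν)
    (hintβ : ∀ θ' : Θ, Integrable (fun x => η x * μ θ' x ^ β) ν)
    (hintg : ∀ θ' : Θ, Integrable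
      (fun x => -(g x) * ((μ θ' x) ^ β - 1) / β + (μ θ' x) ^ (1 + β) / (1 + β)) ν)
    (hints : ∀ θ' : Θ, Integrable
      (fun x => -(μstar x) * ((μ θ' x) ^ β - 1) / β + (μ θ' x) ^ (1 + β) / (1 + β)) ν)
    (hintss : Integrable
      (fun x => -(μstar x) * ((μstar x) ^ β - 1) / β + (μstar x) ^ (1 + β) / (1 + β)) ν) :
    uscore ν β g (μ θ)
      ≥ uscore ν β g (μ θs) - 2 * α ^ (1 - β / β0) * β⁻¹ * ε ^ (β / β0)
        + (uscore ν β μstar (μ θ) - uscore ν β μstar μstar) ∧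
    ((∀ θ' : Θ, (∫ x, η x * μ θ' x ^ β0 ∂ν < ε) →
        uscore ν β g (μ θ) ≤ uscore ν β g (μ θ')) →
      uscore ν β μstar (μ θ) - uscore ν β μstar μstar
        ≤ 2 * α ^ (1 - β / β0) * β⁻¹ * ε ^ (β / β0)) := by
  subst hg
  have hβ0 : 0 < β0 := lt_of_lt_of_le hβ hββ0
  set B : ℝ := α ^ (1 - β / β0) * ε ^ (β / β0) with hB_def
  have hBnn : 0 ≤ B :=
    mul_nonneg (Real.rpow_nonneg hαpos.le _) (Real.rpow_nonneg hε.le _)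
  -- key bound: for any θ' in Θ_ε, 0 ≤ ∫ η μ^β ≤ B
  have hbound : ∀ θ' : Θ, (∫ x, η x * μ θ' x ^ β0 ∂ν < ε) →
      ∫ x, η x * μ θ' x ^ β ∂ν ≤ B := by
    intro θ' hθ'
    have hI0nn : 0 ≤ ∫ x, η x * μ θ' x ^ β0 ∂ν :=
      integral_nonneg fun x => mul_nonneg (hηnn x) (Real.rpow_nonneg (hμnn θ' x) _)
    rcases eq_or_lt_of_le hββ0 with heq | hlt
    · subst heq
      have : (1 : ℝ) - β / β = 0 := by field_simp; norm_num
      rw [hB_def, this, Real.rpow_zero, one_mul, div_self hβ.ne', Real.rpow_one]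
      exact hθ'.le
    · have h := holder_bd hηm (hμm θ') hηnn (hμnn θ') hβ hlt hintη (hintβ0 θ')
      refine h.trans ?_
      rw [hB_def, ← hα, mul_comm _ ((α : ℝ) ^ (1 - β / β0))]
      exact mul_le_mul_of_nonneg_left
        (Real.rpow_le_rpow hI0nn hθ'.le (div_nonneg hβ.le hβ0.le)) (Real.rpow_nonneg hαpos.le _)
  have hInn : ∀ θ' : Θ, 0 ≤ ∫ x, η x * μ θ' x ^ β ∂ν := fun θ' =>
    integral_nonneg fun x => mul_nonneg (hηnn x) (Real.rpow_nonneg (hμnn θ' x) _)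
  -- decompositions
  have hd : ∀ θ' : Θ, uscore ν β (fun x => μstar x + η x) (μ θ')
      = uscore ν β μstar (μ θ') + (α - ∫ x, η x * μ θ' x ^ β ∂ν) / β := by
    intro θ'
    rw [decomp hβ hintη (hintβ θ') (hints θ'), hα]
  -- correct specification
  have hss : uscore ν β μstar (μ θs) = uscore ν β μstar μstar := by
    refine integral_congr_ae ?_
    filter_upwards [hspec] with x hx
    rw [hx]
  set Iθ : ℝ := ∫ x, η x * μ θ x ^ β ∂ν
  set Iθs : ℝ := ∫ x, η x * μ θs x ^ β ∂ν
  have h1 : Iθ ≤ B := hbound θ hθ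
  have h2 : 0 ≤ Iθs := hInn θs
  have h3 : 0 ≤ Iθ := hInn θ
  constructor
  · rw [hd θ, hd θs, hss, ge_iff_le]
    have : 2 * α ^ (1 - β / β0) * β⁻¹ * ε ^ (β / β0) = 2 * B / β := by
      rw [hB_def]; field_simp
    rw [this]
    have hβB : B / β ≤ 2 * B / β := by
      apply div_le_div_of_nonneg_right ?_ hβ.le
      linarith
    have : (α - Iθs) / β - (α - Iθ) / β ≤ 2 * B / β := by
      rw [div_sub_div_same]
      refine le_trans ?_ hβB
      apply div_le_div_of_nonneg_right ?_ hβ.le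
      linarith
    linarith
  · intro hmin
    have hle := hmin θs hθs
    rw [hd θ, hd θs, hss] at hle
    have : 2 * α ^ (1 - β / β0) * β⁻¹ * ε ^ (β / β0) = 2 * B / β := by
      rw [hB_def]; field_simp
    rw [this]
    have h4 : (Iθ - Iθs) / β ≤ 2 * B / β := by
      apply div_le_div_of_nonneg_right ?_ hβ.le
      linarith
    have h5 : uscore ν β μstar (μ θ) - uscore ν β μstar μstar ≤ (Iθ - Iθs) / β := by
      have := hle
      have expand : (α - Iθ) / β - (α - Iθs) / β = -((Iθ - Iθs) / β) := by ring
      linarith [hle]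
    linarith
end
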